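/- Let p > 0 and d > 1, let g be a twice continuously differentiable function on (-1,1) satisfying (1-s²) g''(s) - 2(d-1) s g'(s) + p(d-1) g(s) = 0 for all s ∈ (-1,1), and define W(x,y) = (x+y)^p g((y-x)/(x+y)) for x, y > 0. Then W satisfies the partial differential equation ((d-1)/(2x)) W_x(x,y) + ((d-1)/(2y)) W_y(x,y) + (1/2)[W_{xx}(x,y) - 2 W_{xy}(x,y) + W_{yy}(x,y)] = 0 for all x, y > 0. -/

import Mathlib

open Set Filter Topology

lemma key2 (q a b x y : ℝ) (hxy : 0 < x + y) (f f' : ℝ → ℝ)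
    (hf : HasDerivAt f (f' ((y - x) / (x + y))) ((y - x) / (x + y))) :
    HasDerivAt (fun t => (a + b * t) * (t + y) ^ q * f ((y - t) / (t + y)))
      (b * (x + y) ^ q * f ((y - x) / (x + y))
        + (a + b * x) * q * (x + y) ^ (q - 1) * f ((y - x) / (x + y))
        - 2 * y * (a + b * x) * (x + y) ^ (q - 2) * f' ((y - x) / (x + y))) x := by
  have hne : x + y ≠ 0 := ne_of_gt hxy
  have h2 : HasDerivAt (fun t : ℝ => t + y) 1 x := (hasDerivAt_id x).add_const y
  have h1 : HasDerivAt (fun t : ℝ => y - t) (-1) x := by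
    simpa using (hasDerivAt_id x).const_sub y
  have hσ : HasDerivAt (fun t : ℝ => (y - t) / (t + y)) (-2 * y / (x + y) ^ 2) x := by
    have := h1.div h2 hne
    refine this.congr_deriv ?_
    field_simp
    ring
  have hpow : HasDerivAt (fun t : ℝ => (t + y) ^ q) (1 * q * (x + y) ^ (q - 1)) x := by
    simpa using h2.rpow_const (Or.inl hne)
  have hlin : HasDerivAt (fun t : ℝ => a + b * t) b x := by
    simpa using ((hasDerivAt_id x).const_mul b).const_add a
  have hcomp : HasDerivAt (fun t => f ((y - t) / (t + y)))
      (f' ((y - x) / (x + y)) * (-2 * y / (x + y) ^ 2)) x := by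
    exact HasDerivAt.comp x hf hσ
  have H := (hlin.mul hpow).mul hcomp
  refine H.congr_deriv ?_
  simp only [Pi.mul_apply]
  have hq : (x + y) ^ q = (x + y) ^ (q - 2) * (x + y) ^ 2 := by
    rw [← Real.rpow_natCast (x + y) 2, ← Real.rpow_add hxy]
    norm_num
  rw [hq]
  field_simp
  ring

lemma key2' (q a b x y : ℝ) (hxy : 0 < x + y) (f f' : ℝ → ℝ)
    (hf : HasDerivAt f (f' ((y - x) / (x + y))) ((y - x) / (x + y))) :
    HasDerivAt (fun u => (a + b * u) * (x + u) ^ q * f ((u - x) / (x + u)))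
      (b * (x + y) ^ q * f ((y - x) / (x + y))
        + (a + b * y) * q * (x + y) ^ (q - 1) * f ((y - x) / (x + y))
        + 2 * x * (a + b * y) * (x + y) ^ (q - 2) * f' ((y - x) / (x + y))) y := by
  have hne : x + y ≠ 0 := ne_of_gt hxy
  have h2 : HasDerivAt (fun u : ℝ => x + u) 1 y := by
    simpa using (hasDerivAt_id y).const_add x
  have h1 : HasDerivAt (fun u : ℝ => u - x) 1 y := (hasDerivAt_id y).sub_const x
  have hσ : HasDerivAt (fun u : ℝ => (u - x) / (x + u)) (2 * x / (x + y) ^ 2) y := by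
    have := h1.div h2 hne
    refine this.congr_deriv ?_
    field_simp
    ring
  have hpow : HasDerivAt (fun u : ℝ => (x + u) ^ q) (1 * q * (x + y) ^ (q - 1)) y := by
    simpa using h2.rpow_const (Or.inl hne)
  have hlin : HasDerivAt (fun u : ℝ => a + b * u) b y := by
    simpa using ((hasDerivAt_id y).const_mul b).const_add a
  have hcomp : HasDerivAt (fun u => f ((u - x) / (x + u)))
      (f' ((y - x) / (x + y)) * (2 * x / (x + y) ^ 2)) y := by
    exact HasDerivAt.comp y hf hσ
  have H := (hlin.mul hpow).mul hcomp
  refine H.congr_deriv ?_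
  simp only [Pi.mul_apply]
  have hq : (x + y) ^ q = (x + y) ^ (q - 2) * (x + y) ^ 2 := by
    rw [← Real.rpow_natCast (x + y) 2, ← Real.rpow_add hxy]
    norm_num
  rw [hq]
  field_simp

/-- if `g` is a C² solution of the ODE on `(-1,1)` and
`W(x,y) = (x+y)^p g((y-x)/(x+y))`, then `W` solves the PDE \eqref{finvar}. -/
theorem stmt13 (p d : ℝ) (hp : 0 < p) (hd : 1 < d)
    (g : ℝ → ℝ) (hg : ContDiffOn ℝ 2 g (Set.Ioo (-1 : ℝ) 1))
    (hode : ∀ s ∈ Set.Ioo (-1 : ℝ) 1,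
      (1 - s ^ 2) * deriv (deriv g) s - 2 * (d - 1) * s * deriv g s
        + p * (d - 1) * g s = 0)
    (W : ℝ → ℝ → ℝ)
    (hW : ∀ x y : ℝ, W x y = (x + y) ^ p * g ((y - x) / (x + y))) :
    ∀ x y : ℝ, 0 < x → 0 < y →
      (d - 1) / (2 * x) * deriv (fun t => W t y) x
        + (d - 1) / (2 * y) * deriv (fun t => W x t) y
        + 1 / 2 * (deriv (fun t => deriv (fun u => W u y) t) x
            - 2 * deriv (fun u => deriv (fun t => W t u) x) y
            + deriv (fun u => deriv (fun t => W x t) u) y) = 0 := by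
  have hmem : ∀ a b : ℝ, 0 < a → 0 < b → (b - a) / (a + b) ∈ Set.Ioo (-1 : ℝ) 1 := by
    intro a b ha hb
    have hab : (0:ℝ) < a + b := by linarith
    constructor
    · rw [lt_div_iff₀ hab]; linarith
    · rw [div_lt_iff₀ hab]; linarith
  have hg' : ContDiffOn ℝ 1 (deriv g) (Set.Ioo (-1 : ℝ) 1) :=
    hg.deriv_of_isOpen isOpen_Ioo (by norm_num)
  have hgd : ∀ s ∈ Set.Ioo (-1 : ℝ) 1, HasDerivAt g (deriv g s) s := by
    intro s hs
    exact (((hg.differentiableOn (by norm_num)).differentiableAt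
      (isOpen_Ioo.mem_nhds hs))).hasDerivAt
  have hg1d : ∀ s ∈ Set.Ioo (-1 : ℝ) 1, HasDerivAt (deriv g) (deriv (deriv g) s) s := by
    intro s hs
    exact (((hg'.differentiableOn (by norm_num)).differentiableAt
      (isOpen_Ioo.mem_nhds hs))).hasDerivAt
  -- first derivatives at arbitrary points
  have EWx : ∀ a b : ℝ, 0 < a → 0 < b →
      HasDerivAt (fun t => W t b)
        (p * (a + b) ^ (p - 1) * g ((b - a) / (a + b))
          - 2 * b * (a + b) ^ (p - 2) * deriv g ((b - a) / (a + b))) a := by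
    intro a b ha hb
    have hab : (0:ℝ) < a + b := by linarith
    have heq : (fun t => W t b) = fun t => ((1:ℝ) + 0 * t) * (t + b) ^ p * g ((b - t) / (t + b)) := by
      funext t; rw [hW]; ring
    rw [heq]
    have H := key2 p 1 0 a b hab g (deriv g) (hgd _ (hmem a b ha hb))
    convert H using 1
    ring
  have EWy : ∀ a b : ℝ, 0 < a → 0 < b →
      HasDerivAt (fun t => W a t)
        (p * (a + b) ^ (p - 1) * g ((b - a) / (a + b))
          + 2 * a * (a + b) ^ (p - 2) * deriv g ((b - a) / (a + b))) b := by
    intro a b ha hb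
    have hab : (0:ℝ) < a + b := by linarith
    have heq : (fun t => W a t) = fun t => ((1:ℝ) + 0 * t) * (a + t) ^ p * g ((t - a) / (a + t)) := by
      funext t; rw [hW]; ring
    rw [heq]
    have H := key2' p 1 0 a b hab g (deriv g) (hgd _ (hmem a b ha hb))
    convert H using 1
    ring
  intro x y hx hy
  have hxy : (0:ℝ) < x + y := by linarith
  have hs := hmem x y hx hy
  -- second derivative in x
  have hev1 : (fun t => deriv (fun u => W u y) t) =ᶠ[𝓝 x]
      (fun t => (p + 0 * t) * (t + y) ^ (p - 1) * g ((y - t) / (t + y))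
        - (2 * y + 0 * t) * (t + y) ^ (p - 2) * deriv g ((y - t) / (t + y))) := by
    filter_upwards [eventually_gt_nhds hx] with t ht
    rw [(EWx t y ht hy).deriv]
    ring
  have Hxx : HasDerivAt
      (fun t => (p + 0 * t) * (t + y) ^ (p - 1) * g ((y - t) / (t + y))
        - (2 * y + 0 * t) * (t + y) ^ (p - 2) * deriv g ((y - t) / (t + y)))
      ((0 * (x + y) ^ (p - 1) * g ((y - x) / (x + y))
        + (p + 0 * x) * (p - 1) * (x + y) ^ (p - 1 - 1) * g ((y - x) / (x + y))
        - 2 * y * (p + 0 * x) * (x + y) ^ (p - 1 - 2) * deriv g ((y - x) / (x + y)))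
      - (0 * (x + y) ^ (p - 2) * deriv g ((y - x) / (x + y))
        + (2 * y + 0 * x) * (p - 2) * (x + y) ^ (p - 2 - 1) * deriv g ((y - x) / (x + y))
        - 2 * y * (2 * y + 0 * x) * (x + y) ^ (p - 2 - 2) * deriv (deriv g) ((y - x) / (x + y)))) x :=
    (key2 (p-1) p 0 x y hxy g (deriv g) (hgd _ hs)).sub
      (key2 (p-2) (2*y) 0 x y hxy (deriv g) (deriv (deriv g)) (hg1d _ hs))
  have Dxx := hev1.deriv_eq.trans Hxx.deriv
  -- mixed second derivative
  have hev2 : (fun u => deriv (fun t => W t u) x) =ᶠ[𝓝 y]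
      (fun u => (p + 0 * u) * (x + u) ^ (p - 1) * g ((u - x) / (x + u))
        - (0 + 2 * u) * (x + u) ^ (p - 2) * deriv g ((u - x) / (x + u))) := by
    filter_upwards [eventually_gt_nhds hy] with u hu
    rw [(EWx x u hx hu).deriv]
    ring
  have Hxy : HasDerivAt
      (fun u => (p + 0 * u) * (x + u) ^ (p - 1) * g ((u - x) / (x + u))
        - (0 + 2 * u) * (x + u) ^ (p - 2) * deriv g ((u - x) / (x + u)))
      ((0 * (x + y) ^ (p - 1) * g ((y - x) / (x + y))
        + (p + 0 * y) * (p - 1) * (x + y) ^ (p - 1 - 1) * g ((y - x) / (x + y))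
        + 2 * x * (p + 0 * y) * (x + y) ^ (p - 1 - 2) * deriv g ((y - x) / (x + y)))
      - (2 * (x + y) ^ (p - 2) * deriv g ((y - x) / (x + y))
        + (0 + 2 * y) * (p - 2) * (x + y) ^ (p - 2 - 1) * deriv g ((y - x) / (x + y))
        + 2 * x * (0 + 2 * y) * (x + y) ^ (p - 2 - 2) * deriv (deriv g) ((y - x) / (x + y)))) y :=
    (key2' (p-1) p 0 x y hxy g (deriv g) (hgd _ hs)).sub
      (key2' (p-2) 0 2 x y hxy (deriv g) (deriv (deriv g)) (hg1d _ hs))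
  have Dxy := hev2.deriv_eq.trans Hxy.deriv
  -- second derivative in y
  have hev3 : (fun u => deriv (fun t => W x t) u) =ᶠ[𝓝 y]
      (fun u => (p + 0 * u) * (x + u) ^ (p - 1) * g ((u - x) / (x + u))
        + (2 * x + 0 * u) * (x + u) ^ (p - 2) * deriv g ((u - x) / (x + u))) := by
    filter_upwards [eventually_gt_nhds hy] with u hu
    rw [(EWy x u hx hu).deriv]
    ring
  have Hyy : HasDerivAt
      (fun u => (p + 0 * u) * (x + u) ^ (p - 1) * g ((u - x) / (x + u))
        + (2 * x + 0 * u) * (x + u) ^ (p - 2) * deriv g ((u - x) / (x + u)))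
      ((0 * (x + y) ^ (p - 1) * g ((y - x) / (x + y))
        + (p + 0 * y) * (p - 1) * (x + y) ^ (p - 1 - 1) * g ((y - x) / (x + y))
        + 2 * x * (p + 0 * y) * (x + y) ^ (p - 1 - 2) * deriv g ((y - x) / (x + y)))
      + (0 * (x + y) ^ (p - 2) * deriv g ((y - x) / (x + y))
        + (2 * x + 0 * y) * (p - 2) * (x + y) ^ (p - 2 - 1) * deriv g ((y - x) / (x + y))
        + 2 * x * (2 * x + 0 * y) * (x + y) ^ (p - 2 - 2) * deriv (deriv g) ((y - x) / (x + y)))) y :=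
    (key2' (p-1) p 0 x y hxy g (deriv g) (hgd _ hs)).add
      (key2' (p-2) (2*x) 0 x y hxy (deriv g) (deriv (deriv g)) (hg1d _ hs))
  have Dyy := hev3.deriv_eq.trans Hyy.deriv
  rw [(EWx x y hx hy).deriv, (EWy x y hx hy).deriv, Dxx, Dxy, Dyy]
  -- normalize exponents
  rw [show p - 1 - 1 = p - 2 from by ring, show p - 1 - 2 = p - 3 from by ring,
      show p - 2 - 1 = p - 3 from by ring, show p - 2 - 2 = p - 4 from by ring]
  have hE1 : (x + y) ^ (p - 1) = (x + y) ^ (p - 2) * (x + y) := by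
    rw [show p - 1 = (p - 2) + 1 from by ring, Real.rpow_add hxy, Real.rpow_one]
  have hE2 : (x + y) ^ (p - 2) = (x + y) ^ (p - 3) * (x + y) := by
    rw [show p - 2 = (p - 3) + 1 from by ring, Real.rpow_add hxy, Real.rpow_one]
  have hE3 : (x + y) ^ (p - 3) = (x + y) ^ (p - 4) * (x + y) := by
    rw [show p - 3 = (p - 4) + 1 from by ring, Real.rpow_add hxy, Real.rpow_one]
  rw [hE1, hE2, hE3]
  have hode2 : 4 * x * y * deriv (deriv g) ((y - x) / (x + y))
      - 2 * (d - 1) * (y - x) * (x + y) * deriv g ((y - x) / (x + y))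
      + p * (d - 1) * (x + y) ^ (2:ℕ) * g ((y - x) / (x + y)) = 0 := by
    have h := hode _ hs
    have hne : x + y ≠ 0 := ne_of_gt hxy
    field_simp at h
    have h3 : (x + y) * (4 * x * y * deriv (deriv g) ((y - x) / (x + y))
        - 2 * (d - 1) * (y - x) * (x + y) * deriv g ((y - x) / (x + y))
        + p * (d - 1) * (x + y) ^ (2:ℕ) * g ((y - x) / (x + y))) = 0 := by
      linear_combination (x + y) * h
    rcases mul_eq_zero.mp h3 with h4 | h4
    · exact absurd h4 hne
    · exact h4
  set E := (x + y) ^ (p - 4) with hE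
  set g0 := g ((y - x) / (x + y))
  set g1 := deriv g ((y - x) / (x + y))
  set g2 := deriv (deriv g) ((y - x) / (x + y))
  have hxne : x ≠ 0 := ne_of_gt hx
  have hyne : y ≠ 0 := ne_of_gt hy
  field_simp
  linear_combination (E * (x + y) ^ 2) * hode2
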